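/- There exists an absolute constant C > 0 such that for every n ≥ 1 and every n × n complex matrix A all of whose entries have absolute value at most 1, there exists a vector x ∈ {-1, 0, 1}^n with at least n/4 non-zero coordinates such that ‖Ax‖_∞ ≤ C √n. -/

import Mathlib

open Finset Real

-- L1: binomial tail bound
lemma L1 (N t : ℕ) (α : ℝ) (h0 : 0 < α) (h2 : α ≤ 1/2) (ht : t ≤ N) :
    (∑ k ∈ Finset.range (t+1), (N.choose k : ℝ)) * (α ^ t * (1 - α) ^ (N - t)) ≤ 1 := by
  have h1 : α ≤ 1 - α := by linarith
  have h1' : (0:ℝ) < 1 - α := by linarith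
  have key : ∀ k ∈ Finset.range (t+1),
      (N.choose k : ℝ) * (α ^ t * (1-α) ^ (N - t)) ≤ (N.choose k : ℝ) * (α ^ k * (1-α) ^ (N - k)) := by
    intro k hk
    rw [Finset.mem_range, Nat.lt_succ_iff] at hk
    have hNk : N - k = (N - t) + (t - k) := by omega
    have htk : t = k + (t - k) := by omega
    have : α ^ t * (1-α) ^ (N - t) ≤ α ^ k * (1-α) ^ (N - k) := by
      rw [hNk, pow_add]
      nth_rewrite 1 [htk]
      rw [pow_add]
      have : α ^ (t-k) ≤ (1-α) ^ (t-k) := pow_le_pow_left₀ h0.le h1 _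
      have hα : (0:ℝ) ≤ α ^ k := pow_nonneg h0.le _
      calc α ^ k * α ^ (t-k) * (1-α)^(N-t) ≤ α ^ k * (1-α) ^ (t-k) * (1-α)^(N-t) := by
              apply mul_le_mul_of_nonneg_right _ (pow_nonneg h1'.le _)
              exact mul_le_mul_of_nonneg_left this hα
           _ = α ^ k * ((1-α)^(N-t) * (1-α) ^ (t-k)) := by ring
    exact mul_le_mul_of_nonneg_left this (Nat.cast_nonneg _)
  calc (∑ k ∈ Finset.range (t+1), (N.choose k : ℝ)) * (α ^ t * (1 - α) ^ (N - t))
      = ∑ k ∈ Finset.range (t+1), (N.choose k : ℝ) * (α ^ t * (1-α) ^ (N-t)) := by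
        rw [Finset.sum_mul]
    _ ≤ ∑ k ∈ Finset.range (t+1), (N.choose k : ℝ) * (α ^ k * (1-α) ^ (N-k)) :=
        Finset.sum_le_sum key
    _ ≤ ∑ k ∈ Finset.range (N+1), (N.choose k : ℝ) * (α ^ k * (1-α) ^ (N-k)) := by
        apply Finset.sum_le_sum_of_subset_of_nonneg
        · exact Finset.range_subset_range.2 (by omega)
        · intro k _ _
          positivity
    _ = (α + (1-α))^N := by
        rw [add_pow]
        exact Finset.sum_congr rfl (fun k _ => by ring)
    _ = 1 := by norm_num

noncomputable def eps {n : ℕ} (b : Fin n → Bool) (j : Fin n) : ℝ := if b j then 1 else -1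

-- MGF bound
lemma L2 {n : ℕ} (r : Fin n → ℝ) (hr : ∀ j, |r j| ≤ 1) (θ : ℝ) :
    ∑ b : Fin n → Bool, Real.exp (θ * ∑ j, r j * eps b j) ≤ 2^n * Real.exp (θ^2 * n / 2) := by
  have step1 : ∀ b : Fin n → Bool, Real.exp (θ * ∑ j, r j * eps b j)
      = ∏ j, Real.exp (θ * (r j * eps b j)) := by
    intro b
    rw [← Real.exp_sum, Finset.mul_sum]
  simp_rw [step1]
  have step2 : ∑ b : Fin n → Bool, ∏ j, Real.exp (θ * (r j * eps b j))
      = ∏ j : Fin n, ∑ x : Bool, Real.exp (θ * (r j * (if x then 1 else -1))) := by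
    rw [Finset.prod_univ_sum]
    rw [← Fintype.piFinset_univ]
    rfl
  rw [step2]
  have step3 : ∀ j : Fin n, ∑ x : Bool, Real.exp (θ * (r j * (if x then 1 else -1)))
      ≤ 2 * Real.exp (θ^2 / 2) := by
    intro j
    rw [Fintype.sum_bool]
    have e1 : θ * (r j * (if (true:Bool) then (1:ℝ) else -1)) = θ * r j := by simp
    have e2 : θ * (r j * (if (false:Bool) then (1:ℝ) else -1)) = -(θ * r j) := by
      simp only [Bool.false_eq_true, if_false]; ring
    rw [e1, e2]
    have h2 := Real.cosh_le_exp_half_sq (θ * r j)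
    rw [Real.cosh_eq] at h2
    have h3 : Real.exp ((θ * r j)^2 / 2) ≤ Real.exp (θ^2/2) := by
      apply Real.exp_le_exp.2
      have hr2 : (r j)^2 ≤ 1 := by nlinarith [abs_le.1 (hr j)]
      have : (θ * r j)^2 ≤ θ^2 := by nlinarith [hr2, sq_nonneg θ]
      linarith
    linarith
  calc ∏ j : Fin n, ∑ x : Bool, Real.exp (θ * (r j * (if x then 1 else -1)))
      ≤ ∏ _j : Fin n, 2 * Real.exp (θ^2/2) := by
        apply Finset.prod_le_prod
        · intro j _
          positivity
        · intro j _; exact step3 j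
    _ = 2^n * Real.exp (θ^2 * n / 2) := by
        rw [Finset.prod_const, Finset.card_univ, Fintype.card_fin, mul_pow, ← Real.exp_nat_mul]
        ring_nf

lemma L3 {n : ℕ} (hn : 1 ≤ n) (r : Fin n → ℝ) (hr : ∀ j, |r j| ≤ 1) (t : ℝ) (ht : 0 ≤ t) :
    ((Finset.univ.filter (fun b : Fin n → Bool => t ≤ ∑ j, r j * eps b j)).card : ℝ)
      ≤ 2^n * Real.exp (-(t^2) / (2*n)) := by
  set θ : ℝ := t / n with hθ
  have hn0 : (0:ℝ) < n := by exact_mod_cast hn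
  have hθ0 : 0 ≤ θ := div_nonneg ht hn0.le
  set S := Finset.univ.filter (fun b : Fin n → Bool => t ≤ ∑ j, r j * eps b j) with hS
  have h1 : (S.card : ℝ) * Real.exp (θ * t) ≤ 2^n * Real.exp (θ^2 * n / 2) := by
    calc (S.card : ℝ) * Real.exp (θ * t) = ∑ _b ∈ S, Real.exp (θ * t) := by
          rw [Finset.sum_const, nsmul_eq_mul]
      _ ≤ ∑ b ∈ S, Real.exp (θ * ∑ j, r j * eps b j) := by
          apply Finset.sum_le_sum
          intro b hb
          apply Real.exp_le_exp.2
          have hb' : t ≤ ∑ j, r j * eps b j := (Finset.mem_filter.1 hb).2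
          exact mul_le_mul_of_nonneg_left hb' hθ0
      _ ≤ ∑ b : Fin n → Bool, Real.exp (θ * ∑ j, r j * eps b j) := by
          apply Finset.sum_le_sum_of_subset_of_nonneg (Finset.filter_subset _ _)
          intro b _ _
          positivity
      _ ≤ 2^n * Real.exp (θ^2 * n / 2) := L2 r hr θ
  have key : (2:ℝ)^n * Real.exp (-(t^2) / (2*n)) * Real.exp (θ * t) = 2^n * Real.exp (θ^2 * n / 2) := by
    rw [mul_assoc, ← Real.exp_add]
    congr 1
    have hne : (n:ℝ) ≠ 0 := hn0.ne'
    rw [hθ]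
    field_simp
    ring
  have hexp : (0:ℝ) < Real.exp (θ * t) := Real.exp_pos _
  have := h1
  rw [← key] at this
  exact le_of_mul_le_mul_right this hexp

noncomputable def rowv {n : ℕ} (A : Matrix (Fin n) (Fin n) ℂ) (i : Fin n) (p : Bool) : Fin n → ℝ :=
  fun j => if p then (A i j).re else (A i j).im

noncomputable def sig {n : ℕ} (A : Matrix (Fin n) (Fin n) ℂ) (b : Fin n → Bool)
    (ip : Fin n × Bool) : ℤ :=
  round ((∑ j, rowv A ip.1 ip.2 j * eps b j) / (15 * Real.sqrt n))

lemma rowv_le {n : ℕ} (A : Matrix (Fin n) (Fin n) ℂ) (hA : ∀ i j, ‖A i j‖ ≤ 1)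
    (i : Fin n) (p : Bool) : ∀ j, |rowv A i p j| ≤ 1 := by
  intro j
  unfold rowv
  cases p
  · simp only [if_false, Bool.false_eq_true]
    exact le_trans (Complex.abs_im_le_norm _) (hA i j)
  · simp only [if_true]
    exact le_trans (Complex.abs_re_le_norm _) (hA i j)

lemma L4 {n : ℕ} (hn : 1 ≤ n) (A : Matrix (Fin n) (Fin n) ℂ)
    (hA : ∀ i j, ‖A i j‖ ≤ 1) (ip : Fin n × Bool) (k : ℕ) (hk : 1 ≤ k) :
    ((Finset.univ.filter (fun b : Fin n → Bool => k ≤ (sig A b ip).natAbs)).card : ℝ)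
      ≤ 2^(n+1) * Real.exp (-(225 * k : ℝ)/8) := by
  have hn0 : (0:ℝ) < n := by exact_mod_cast hn
  set Δ : ℝ := 15 * Real.sqrt n with hΔ
  have hΔ0 : 0 < Δ := by positivity
  set r := rowv A ip.1 ip.2 with hr
  have hrle := rowv_le A hA ip.1 ip.2
  set u : ℝ := ((k:ℝ) - 1/2) * Δ with hu
  have hk1 : (1:ℝ) ≤ (k:ℝ) := by exact_mod_cast hk
  have hu0 : 0 ≤ u := by
    apply mul_nonneg _ hΔ0.le
    linarith
  -- inclusion into two one-sided events
  have hincl : (Finset.univ.filter (fun b : Fin n → Bool => k ≤ (sig A b ip).natAbs))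
      ⊆ (Finset.univ.filter (fun b : Fin n → Bool => u ≤ ∑ j, r j * eps b j))
        ∪ (Finset.univ.filter (fun b : Fin n → Bool => u ≤ ∑ j, (-r) j * eps b j)) := by
    intro b hb
    rw [Finset.mem_filter] at hb
    obtain ⟨-, hb⟩ := hb
    set y : ℝ := (∑ j, r j * eps b j) / Δ with hy
    have hsig : sig A b ip = round y := rfl
    have h1 : (k:ℝ) ≤ |((round y : ℤ) : ℝ)| := by
      rw [← hsig]
      calc (k:ℝ) ≤ ((sig A b ip).natAbs : ℝ) := by exact_mod_cast hb
        _ = |((sig A b ip : ℤ) : ℝ)| := by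
            rw [Nat.cast_natAbs]
            simp
    have h2 : |y - round y| ≤ 1/2 := abs_sub_round y
    have h3 : (k:ℝ) - 1/2 ≤ |y| := by
      have := abs_sub_abs_le_abs_sub (round y : ℝ) y
      have h4 : |(round y : ℝ)| - |y| ≤ 1/2 := by
        rw [abs_sub_comm] at h2
        linarith [this]
      linarith
    have h5 : u ≤ |∑ j, r j * eps b j| := by
      have : |∑ j, r j * eps b j| = |y| * Δ := by
        rw [hy, abs_div, abs_of_pos hΔ0]
        field_simp
      rw [this, hu]
      exact mul_le_mul_of_nonneg_right h3 hΔ0.le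
    rcases abs_cases (∑ j, r j * eps b j) with ⟨he, -⟩ | ⟨he, -⟩
    · apply Finset.mem_union_left
      rw [Finset.mem_filter]
      exact ⟨Finset.mem_univ _, by rw [he] at h5; exact h5⟩
    · apply Finset.mem_union_right
      rw [Finset.mem_filter]
      refine ⟨Finset.mem_univ _, ?_⟩
      have : ∑ j, (-r) j * eps b j = -∑ j, r j * eps b j := by
        rw [← Finset.sum_neg_distrib]
        exact Finset.sum_congr rfl (fun j _ => by simp [neg_mul])
      rw [this]
      rw [he] at h5
      exact h5
  have hb1 := L3 hn r hrle u hu0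
  have hb2 := L3 hn (-r) (fun j => by rw [Pi.neg_apply, abs_neg]; exact hrle j) u hu0
  have hcard : ((Finset.univ.filter (fun b : Fin n → Bool => k ≤ (sig A b ip).natAbs)).card : ℝ)
      ≤ 2^n * Real.exp (-(u^2) / (2*n)) + 2^n * Real.exp (-(u^2) / (2*n)) := by
    calc ((Finset.univ.filter (fun b : Fin n → Bool => k ≤ (sig A b ip).natAbs)).card : ℝ)
        ≤ (((Finset.univ.filter (fun b : Fin n → Bool => u ≤ ∑ j, r j * eps b j))
          ∪ (Finset.univ.filter (fun b : Fin n → Bool => u ≤ ∑ j, (-r) j * eps b j))).card : ℝ) := by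
          exact_mod_cast Nat.cast_le.2 (Finset.card_le_card hincl)
      _ ≤ (((Finset.univ.filter (fun b : Fin n → Bool => u ≤ ∑ j, r j * eps b j)).card : ℝ)
          + ((Finset.univ.filter (fun b : Fin n → Bool => u ≤ ∑ j, (-r) j * eps b j)).card : ℝ)) := by
          exact_mod_cast Nat.cast_le.2 (Finset.card_union_le _ _)
      _ ≤ _ := add_le_add hb1 hb2
  have hexp : Real.exp (-(u^2) / (2*n)) ≤ Real.exp (-(225*k:ℝ)/8) := by
    apply Real.exp_le_exp.2
    have hsq : u^2 = ((k:ℝ) - 1/2)^2 * (225 * n) := by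
      rw [hu, mul_pow, hΔ]
      rw [mul_pow, Real.sq_sqrt hn0.le]
      ring
    rw [hsq]
    rw [div_le_div_iff₀ (by positivity) (by norm_num)]
    have h6 : (k:ℝ)/4 ≤ ((k:ℝ) - 1/2)^2 := by nlinarith
    nlinarith [hn0, h6]
  calc ((Finset.univ.filter (fun b : Fin n → Bool => k ≤ (sig A b ip).natAbs)).card : ℝ)
      ≤ 2^n * Real.exp (-(u^2) / (2*n)) + 2^n * Real.exp (-(u^2) / (2*n)) := hcard
    _ = 2^(n+1) * Real.exp (-(u^2) / (2*n)) := by ring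
    _ ≤ 2^(n+1) * Real.exp (-(225*k:ℝ)/8) := by
        apply mul_le_mul_of_nonneg_left hexp (by positivity)

-- layer cake
lemma layer {Ω : Type*} [Fintype Ω] [DecidableEq Ω] (g : Ω → ℕ) (K : ℕ) (hg : ∀ b, g b ≤ K) :
    ∑ b : Ω, (g b : ℝ) = ∑ k ∈ Finset.Icc 1 K, ((Finset.univ.filter (fun b => k ≤ g b)).card : ℝ) := by
  have hnat : ∑ b : Ω, g b = ∑ k ∈ Finset.Icc 1 K, (Finset.univ.filter (fun b => k ≤ g b)).card := by
    have h1 : ∀ k, (Finset.univ.filter (fun b : Ω => k ≤ g b)).card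
        = ∑ b : Ω, if k ≤ g b then 1 else 0 := by
      intro k
      rw [Finset.card_filter]
    simp_rw [h1]
    rw [Finset.sum_comm]
    apply Finset.sum_congr rfl
    intro b _
    have : ∑ k ∈ Finset.Icc 1 K, (if k ≤ g b then 1 else 0)
        = ((Finset.Icc 1 K).filter (fun k => k ≤ g b)).card := by
      rw [Finset.card_filter]
    rw [this]
    have : (Finset.Icc 1 K).filter (fun k => k ≤ g b) = Finset.Icc 1 (g b) := by
      ext k
      simp only [Finset.mem_filter, Finset.mem_Icc]
      have := hg b
      omega
    rw [this, Nat.card_Icc]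
    omega
  calc ∑ b : Ω, (g b : ℝ) = ((∑ b : Ω, g b : ℕ) : ℝ) := by push_cast; rfl
    _ = _ := by rw [hnat]; push_cast; rfl

-- geometric bound
lemma geom_bd (K : ℕ) : ∑ k ∈ Finset.Icc 1 K, Real.exp (-(225 * (k:ℝ))/8)
    ≤ 2 * Real.exp (-225/8) := by
  have hq : Real.exp (-225/8) ≤ 1/2 := by
    rw [show (-225/8 : ℝ) = -(225/8) by norm_num, Real.exp_neg]
    rw [inv_le_comm₀ (Real.exp_pos _) (by norm_num)]
    rw [show ((1:ℝ)/2)⁻¹ = 2 by norm_num]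
    calc (2:ℝ) ≤ Real.exp 1 := by
          have := Real.add_one_le_exp 1
          linarith
      _ ≤ Real.exp (225/8) := Real.exp_le_exp.2 (by norm_num)
  have term : ∀ k : ℕ, 1 ≤ k → Real.exp (-(225*(k:ℝ))/8)
      ≤ Real.exp (-225/8) * (1/2)^(k-1) := by
    intro k hk
    have : (-(225*(k:ℝ))/8) = (-225/8) + (↑(k-1) : ℝ) * (-225/8) := by
      have : ((k-1:ℕ):ℝ) = (k:ℝ) - 1 := by
        have : (1:ℝ) ≤ (k:ℝ) := by exact_mod_cast hk
        push_cast [Nat.cast_sub hk]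
        ring
      rw [this]; ring
    rw [this, Real.exp_add]
    apply mul_le_mul_of_nonneg_left _ (Real.exp_pos _).le
    rw [Real.exp_nat_mul]
    apply pow_le_pow_left₀ (Real.exp_pos _).le
    exact hq
  calc ∑ k ∈ Finset.Icc 1 K, Real.exp (-(225 * (k:ℝ))/8)
      ≤ ∑ k ∈ Finset.Icc 1 K, Real.exp (-225/8) * (1/2)^(k-1) := by
        apply Finset.sum_le_sum
        intro k hk
        exact term k (Finset.mem_Icc.1 hk).1
    _ = Real.exp (-225/8) * ∑ k ∈ Finset.Icc 1 K, (1/2:ℝ)^(k-1) := by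
        rw [Finset.mul_sum]
    _ ≤ Real.exp (-225/8) * 2 := by
        apply mul_le_mul_of_nonneg_left _ (Real.exp_pos _).le
        calc ∑ k ∈ Finset.Icc 1 K, (1/2:ℝ)^(k-1)
            ≤ ∑ j ∈ Finset.range K, (1/2:ℝ)^j := by
              rw [show Finset.Icc 1 K = Finset.Ico 1 (K+1) by rw [Finset.Ico_add_one_right_eq_Icc]]
              rw [Finset.sum_Ico_eq_sum_range]
              apply le_of_eq
              apply Finset.sum_congr (by rw [Nat.add_sub_cancel]) (fun j _ => by congr 1; omega)
          _ ≤ 2 := sum_geometric_two_le K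
    _ = 2 * Real.exp (-225/8) := by ring

lemma exp_small : Real.exp (-225/8) ≤ 1/3200 := by
  rw [show (-225/8 : ℝ) = -(225/8) by norm_num, Real.exp_neg]
  rw [inv_le_comm₀ (Real.exp_pos _) (by norm_num), show ((1:ℝ)/3200)⁻¹ = 3200 by norm_num]
  have h2 : (2:ℝ) ≤ Real.exp 1 := by linarith [Real.add_one_le_exp 1]
  calc (3200:ℝ) ≤ 2^(12:ℕ) := by norm_num
    _ ≤ (Real.exp 1)^(12:ℕ) := pow_le_pow_left₀ (by norm_num) h2 _
    _ = Real.exp ((12:ℕ) * 1) := (Real.exp_nat_mul 1 12).symm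
    _ ≤ Real.exp (225/8) := Real.exp_le_exp.2 (by norm_num)

lemma L6 {n : ℕ} (hn : 1 ≤ n) (A : Matrix (Fin n) (Fin n) ℂ)
    (hA : ∀ i j, ‖A i j‖ ≤ 1) :
    ∑ b : Fin n → Bool, ((∑ ip : Fin n × Bool, (sig A b ip).natAbs : ℕ) : ℝ)
      ≤ 2^n * n / 400 := by
  have hbound : ∀ (b : Fin n → Bool) (ip : Fin n × Bool), (sig A b ip).natAbs ≤ n + 1 := by
    intro b ip
    have h1 : |∑ j, rowv A ip.1 ip.2 j * eps b j| ≤ n := by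
      calc |∑ j, rowv A ip.1 ip.2 j * eps b j| ≤ ∑ j, |rowv A ip.1 ip.2 j * eps b j| :=
            Finset.abs_sum_le_sum_abs _ _
        _ ≤ ∑ _j : Fin n, 1 := by
            apply Finset.sum_le_sum
            intro j _
            rw [abs_mul]
            have h2 := rowv_le A hA ip.1 ip.2 j
            have h3 : |eps b j| ≤ 1 := by unfold eps; split <;> norm_num
            calc |rowv A ip.1 ip.2 j| * |eps b j| ≤ 1 * 1 := by
                  apply mul_le_mul h2 h3 (abs_nonneg _) zero_le_one
              _ = 1 := by norm_num
        _ = n := by simp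
    have hΔ : (1:ℝ) ≤ 15 * Real.sqrt n := by
      have : (1:ℝ) ≤ Real.sqrt n := by
        rw [show (1:ℝ) = Real.sqrt 1 by simp]
        apply Real.sqrt_le_sqrt
        exact_mod_cast hn
      linarith
    set y := (∑ j, rowv A ip.1 ip.2 j * eps b j) / (15 * Real.sqrt n) with hy
    have hyle : |y| ≤ n := by
      rw [hy, abs_div, abs_of_pos (by linarith : (0:ℝ) < 15 * Real.sqrt n)]
      calc |∑ j, rowv A ip.1 ip.2 j * eps b j| / (15 * Real.sqrt n)
          ≤ |∑ j, rowv A ip.1 ip.2 j * eps b j| := div_le_self (abs_nonneg _) hΔ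
        _ ≤ n := h1
    have hround : ((sig A b ip).natAbs : ℝ) ≤ (n:ℝ) + 1 := by
      have e1 : ((sig A b ip).natAbs : ℝ) = |((sig A b ip : ℤ) : ℝ)| := by
        rw [Nat.cast_natAbs]; simp
      rw [e1]
      have hsig : sig A b ip = round y := rfl
      rw [hsig]
      have h2 := abs_sub_round y
      have h3 : |((round y : ℤ) : ℝ)| ≤ |y| + 1/2 := by
        have := abs_sub_abs_le_abs_sub ((round y : ℤ) : ℝ) y
        rw [abs_sub_comm] at h2
        linarith
      linarith
    exact_mod_cast hround
  -- now the main chain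
  have swap : ∑ b : Fin n → Bool, ((∑ ip : Fin n × Bool, (sig A b ip).natAbs : ℕ) : ℝ)
      = ∑ ip : Fin n × Bool, ∑ b : Fin n → Bool, (((sig A b ip).natAbs : ℕ) : ℝ) := by
    rw [Finset.sum_comm]
    apply Finset.sum_congr rfl
    intro b _
    push_cast
    rfl
  rw [swap]
  have inner : ∀ ip : Fin n × Bool, ∑ b : Fin n → Bool, (((sig A b ip).natAbs : ℕ) : ℝ)
      ≤ 2^(n+1) * (2 * Real.exp (-225/8)) := by
    intro ip
    rw [layer (fun b => (sig A b ip).natAbs) (n+1) (fun b => hbound b ip)]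
    calc ∑ k ∈ Finset.Icc 1 (n+1), ((Finset.univ.filter
            (fun b : Fin n → Bool => k ≤ (sig A b ip).natAbs)).card : ℝ)
        ≤ ∑ k ∈ Finset.Icc 1 (n+1), 2^(n+1) * Real.exp (-(225 * (k:ℝ))/8) := by
          apply Finset.sum_le_sum
          intro k hk
          exact L4 hn A hA ip k (Finset.mem_Icc.1 hk).1
      _ = 2^(n+1) * ∑ k ∈ Finset.Icc 1 (n+1), Real.exp (-(225 * (k:ℝ))/8) := by
          rw [Finset.mul_sum]
      _ ≤ 2^(n+1) * (2 * Real.exp (-225/8)) := by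
          apply mul_le_mul_of_nonneg_left (geom_bd _) (by positivity)
  calc ∑ ip : Fin n × Bool, ∑ b : Fin n → Bool, (((sig A b ip).natAbs : ℕ) : ℝ)
      ≤ ∑ _ip : Fin n × Bool, 2^(n+1) * (2 * Real.exp (-225/8)) :=
        Finset.sum_le_sum (fun ip _ => inner ip)
    _ = (2*n : ℝ) * (2^(n+1) * (2 * Real.exp (-225/8))) := by
        rw [Finset.sum_const, Finset.card_univ]
        simp [Fintype.card_prod]
        ring
    _ ≤ (2*n : ℝ) * (2^(n+1) * (2 * (1/3200))) := by
        apply mul_le_mul_of_nonneg_left _ (by positivity)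
        apply mul_le_mul_of_nonneg_left _ (by positivity)
        apply mul_le_mul_of_nonneg_left exp_small (by norm_num)
    _ = 2^n * n / 400 := by ring

lemma Lgood {n : ℕ} (hn : 1 ≤ n) (A : Matrix (Fin n) (Fin n) ℂ)
    (hA : ∀ i j, ‖A i j‖ ≤ 1) :
    (2:ℝ)^n / 2 ≤ ((Finset.univ.filter
      (fun b : Fin n → Bool => (∑ ip : Fin n × Bool, (sig A b ip).natAbs) ≤ n/200)).card : ℝ) := by
  classical
  set m := n / 200 with hm
  set f : (Fin n → Bool) → ℕ := fun b => ∑ ip : Fin n × Bool, (sig A b ip).natAbs with hf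
  set good := Finset.univ.filter (fun b : Fin n → Bool => f b ≤ m) with hgood
  set bad := Finset.univ.filter (fun b : Fin n → Bool => ¬ (f b ≤ m)) with hbad
  have hsplit : good.card + bad.card = 2^n := by
    rw [hgood, hbad, Finset.card_filter_add_card_filter_not]
    simp [Fintype.card_fun]
  have hmark : (bad.card : ℝ) * (m+1) ≤ 2^n * n / 400 := by
    calc (bad.card : ℝ) * (m+1) = ∑ _b ∈ bad, ((m:ℝ)+1) := by
          rw [Finset.sum_const, nsmul_eq_mul]
      _ ≤ ∑ b ∈ bad, (f b : ℝ) := by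
          apply Finset.sum_le_sum
          intro b hb
          have := (Finset.mem_filter.1 hb).2
          have : m + 1 ≤ f b := by omega
          exact_mod_cast this
      _ ≤ ∑ b : Fin n → Bool, (f b : ℝ) := by
          apply Finset.sum_le_sum_of_subset_of_nonneg (Finset.filter_subset _ _)
          intro b _ _
          positivity
      _ ≤ 2^n * n / 400 := L6 hn A hA
  have hn400 : (n:ℝ) / 200 < (m:ℝ) + 1 := by
    have h1 : n < 200 * (m + 1) := by
      rw [hm]
      omega
    have : (n:ℝ) < 200 * ((m:ℝ) + 1) := by exact_mod_cast h1
    linarith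
  have hbadcard : (bad.card : ℝ) ≤ 2^n / 2 := by
    by_contra h
    push_neg at h
    have h2 : (2:ℝ)^n / 2 * (m+1) < (bad.card:ℝ) * (m+1) := by
      apply mul_lt_mul_of_pos_right h
      positivity
    have h3 : (2:ℝ)^n * n / 400 < 2^n / 2 * ((m:ℝ)+1) := by
      have hp : (0:ℝ) < 2^n / 2 := by positivity
      calc (2:ℝ)^n * n / 400 = 2^n / 2 * ((n:ℝ)/200) := by ring
        _ < 2^n / 2 * ((m:ℝ)+1) := by
            apply mul_lt_mul_of_pos_left _ hp
            linarith
    linarith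
  have : (good.card : ℝ) + (bad.card : ℝ) = 2^n := by
    rw [← Nat.cast_add, hsplit]
    push_cast
    rfl
  linarith

-- Hamming ball bound
lemma ball_card {n u : ℕ} (b₀ : Fin n → Bool) :
    ((Finset.univ.filter (fun b : Fin n → Bool => hammingDist b b₀ < u)).card : ℕ)
      ≤ ∑ k ∈ Finset.range u, n.choose k := by
  classical
  set D : (Fin n → Bool) → Finset (Fin n) := fun b => Finset.univ.filter (fun j => b j ≠ b₀ j)
    with hD
  have hdist : ∀ b, hammingDist b b₀ = (D b).card := by
    intro b
    rfl
  have hmaps : ∀ b ∈ Finset.univ.filter (fun b : Fin n → Bool => hammingDist b b₀ < u),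
      D b ∈ (Finset.range u).biUnion (fun k => Finset.powersetCard k Finset.univ) := by
    intro b hb
    rw [Finset.mem_biUnion]
    refine ⟨hammingDist b b₀, Finset.mem_range.2 (Finset.mem_filter.1 hb).2, ?_⟩
    rw [Finset.mem_powersetCard]
    exact ⟨Finset.subset_univ _, (hdist b).symm⟩
  have hinj : Set.InjOn D (Finset.univ.filter
      (fun b : Fin n → Bool => hammingDist b b₀ < u)) := by
    intro b hb b' hb' heq
    funext j
    have h1 : (j ∈ D b) = (j ∈ D b') := by rw [heq]
    simp only [hD, Finset.mem_filter, Finset.mem_univ, true_and, eq_iff_iff] at h1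
    cases hbj : b j <;> cases hb'j : b' j <;> cases hb0j : b₀ j <;> simp_all
  calc (Finset.univ.filter (fun b : Fin n → Bool => hammingDist b b₀ < u)).card
      ≤ ((Finset.range u).biUnion (fun k => Finset.powersetCard k Finset.univ)).card :=
        Finset.card_le_card_of_injOn D hmaps hinj
    _ ≤ ∑ k ∈ Finset.range u, (Finset.powersetCard k (Finset.univ : Finset (Fin n))).card :=
        Finset.card_biUnion_le
    _ = ∑ k ∈ Finset.range u, n.choose k := by
        apply Finset.sum_congr rfl
        intro k _
        rw [Finset.card_powersetCard]
        simp

def enc (s : ℤ) : ℕ := if 0 < s then 2*s.natAbs - 1 else 2*s.natAbs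

lemma enc_inj : Function.Injective enc := by
  intro s t h
  unfold enc at h
  split_ifs at h <;> omega

lemma enc_le (s : ℤ) : enc s ≤ 2 * s.natAbs := by
  unfold enc; split_ifs <;> omega

variable {d M : ℕ}

def aext (a : Fin d → ℕ) : ℕ → ℕ := fun k => if h : k < d then a ⟨k, h⟩ else 0

lemma psum_bound (a : Fin d → ℕ) (ha : ∑ k, a k ≤ M) (i : ℕ) (hi : i ≤ d) :
    i + ∑ k ∈ Finset.range i, aext a k < d + M + 1 := by
  have h1 : ∑ k ∈ Finset.range i, aext a k ≤ ∑ k ∈ Finset.range d, aext a k :=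
    Finset.sum_le_sum_of_subset (Finset.range_subset_range.2 hi)
  have h2 : ∑ k ∈ Finset.range d, aext a k = ∑ k : Fin d, a k := by
    rw [Finset.sum_range fun k => aext a k]
    apply Finset.sum_congr rfl
    intro k _
    simp [aext, k.isLt]
  omega

def Pmap (a : Fin d → ℕ) (ha : ∑ k, a k ≤ M) : Fin (d+1) → Fin (d + M + 1) :=
  fun i => ⟨i + ∑ k ∈ Finset.range i, aext a k,
    psum_bound a ha i (Nat.lt_succ_iff.1 i.isLt)⟩

lemma Pmap_strictMono (a : Fin d → ℕ) (ha : ∑ k, a k ≤ M) : StrictMono (Pmap a ha) := by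
  intro i j hij
  simp only [Pmap, Fin.mk_lt_mk, Fin.lt_def]
  have h1 : ∑ k ∈ Finset.range i, aext a k ≤ ∑ k ∈ Finset.range j, aext a k :=
    Finset.sum_le_sum_of_subset (Finset.range_subset_range.2 (le_of_lt hij))
  have : (i:ℕ) < j := hij
  omega

lemma encode_inj (a a' : Fin d → ℕ) (ha : ∑ k, a k ≤ M) (ha' : ∑ k, a' k ≤ M)
    (h : Finset.image (Pmap a ha) Finset.univ = Finset.image (Pmap a' ha') Finset.univ) :
    a = a' := by
  classical
  set s := Finset.image (Pmap a ha) Finset.univ with hs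
  have hcard : s.card = d + 1 := by
    rw [hs, Finset.card_image_of_injective _ (Pmap_strictMono a ha).injective,
      Finset.card_univ, Fintype.card_fin]
  have h1 : Pmap a ha = s.orderEmbOfFin hcard := by
    apply Finset.orderEmbOfFin_unique hcard
    · intro x; exact Finset.mem_image_of_mem _ (Finset.mem_univ x)
    · exact Pmap_strictMono a ha
  have h2 : Pmap a' ha' = s.orderEmbOfFin hcard := by
    apply Finset.orderEmbOfFin_unique hcard
    · intro x
      show Pmap a' ha' x ∈ s
      rw [h]
      exact Finset.mem_image_of_mem _ (Finset.mem_univ x)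
    · exact Pmap_strictMono a' ha'
  have hP : Pmap a ha = Pmap a' ha' := h1.trans h2.symm
  funext k
  have e1 := congrFun hP ⟨(k:ℕ), by omega⟩
  have e2 := congrFun hP ⟨(k:ℕ)+1, by omega⟩
  have v1 : (k:ℕ) + ∑ j ∈ Finset.range k, aext a j
      = (k:ℕ) + ∑ j ∈ Finset.range k, aext a' j := by
    have := congrArg Fin.val e1
    simpa [Pmap] using this
  have v2 : (k:ℕ)+1 + ∑ j ∈ Finset.range ((k:ℕ)+1), aext a j
      = (k:ℕ)+1 + ∑ j ∈ Finset.range ((k:ℕ)+1), aext a' j := by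
    have := congrArg Fin.val e2
    simpa [Pmap] using this
  rw [Finset.sum_range_succ, Finset.sum_range_succ] at v2
  have : aext a k = aext a' k := by omega
  simpa [aext, k.isLt] using this

lemma L1' (N t : ℕ) (α : ℝ) (h0 : 0 < α) (h2 : α ≤ 1/2) (ht : t ≤ N) :
    (∑ k ∈ Finset.range (t+1), (N.choose k : ℝ)) ≤ (1/α) ^ t * (1/(1-α)) ^ (N - t) := by
  have h1 : (0:ℝ) < 1 - α := by linarith
  have hpos : (0:ℝ) < α ^ t * (1 - α) ^ (N - t) := by positivity
  have := L1 N t α h0 h2 ht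
  rw [← le_div_iff₀ hpos] at this
  calc (∑ k ∈ Finset.range (t+1), (N.choose k : ℝ)) ≤ 1 / (α ^ t * (1 - α) ^ (N - t)) := this
    _ = (1/α) ^ t * (1/(1-α)) ^ (N - t) := by
      rw [div_pow, div_pow]
      field_simp
      simp

lemma NQ1 {n : ℕ} (hn : 200 ≤ n) :
    (((2*n + 2*(n/200) + 1).choose (2*n+1) : ℝ))
      * ((∑ k ∈ Finset.range ((n+3)/4), (n.choose k : ℝ)) + 1) ≤ 2^n / 2 := by
  set m := n / 200 with hm
  set u := (n+3) / 4 with hu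
  set D := 2*n + 2*m + 1 with hD
  have hm200 : 200 * m ≤ n := by rw [hm]; omega
  have hu4 : 4 * u ≤ n + 3 := by rw [hu]; omega
  have hu1 : 1 ≤ u := by rw [hu]; omega
  have hun : u - 1 ≤ n := by omega
  have h4u : 4 * (u - 1) ≤ n := by omega
  -- bound the choose term
  have hchoose : (D.choose (2*n+1) : ℝ) ≤ (200:ℝ)^(2*m) * (200/199)^(2*n+1) := by
    have e1 : D.choose (2*n+1) = D.choose (2*m) := by
      have : D - (2*n+1) = 2*m := by omega
      rw [← this, Nat.choose_symm (by omega)]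
    rw [e1]
    have h2 : (D.choose (2*m) : ℝ) ≤ ∑ k ∈ Finset.range (2*m+1), (D.choose k : ℝ) := by
      apply Finset.single_le_sum (f := fun k => (D.choose k : ℝ))
      · intro k _; positivity
      · exact Finset.self_mem_range_succ (2*m)
    have h3 := L1' D (2*m) (1/200) (by norm_num) (by norm_num) (by omega)
    have e2 : D - 2*m = 2*n+1 := by omega
    rw [e2] at h3
    calc (D.choose (2*m) : ℝ) ≤ ∑ k ∈ Finset.range (2*m+1), (D.choose k : ℝ) := h2
      _ ≤ (1/(1/200):ℝ)^(2*m) * (1/(1-1/200))^(2*n+1) := h3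
      _ = (200:ℝ)^(2*m) * (200/199)^(2*n+1) := by norm_num
  -- bound ball term
  have hB1 : (1:ℝ) ≤ ∑ k ∈ Finset.range u, (n.choose k : ℝ) := by
    calc (1:ℝ) = ((n.choose 0 : ℕ) : ℝ) := by norm_num
      _ ≤ ∑ k ∈ Finset.range u, (n.choose k : ℝ) := by
        apply Finset.single_le_sum (f := fun k => (n.choose k : ℝ))
        · intro k _; positivity
        · exact Finset.mem_range.2 (by omega)
  have hball : (∑ k ∈ Finset.range u, (n.choose k : ℝ)) ≤ (4/3:ℝ)^n * 3^(u-1) := by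
    have h3 := L1' n (u-1) (1/4) (by norm_num) (by norm_num) hun
    have e3 : u - 1 + 1 = u := by omega
    rw [e3] at h3
    calc (∑ k ∈ Finset.range u, (n.choose k : ℝ))
        ≤ (1/(1/4):ℝ)^(u-1) * (1/(1-1/4))^(n-(u-1)) := h3
      _ = (4:ℝ)^(u-1) * (4/3)^(n-(u-1)) := by norm_num
      _ = (4/3:ℝ)^n * 3^(u-1) := by
        have e4 : (4:ℝ)^(u-1) = (4/3:ℝ)^(u-1) * 3^(u-1) := by
          rw [← mul_pow]; norm_num
        rw [e4]
        have e5 : (4/3:ℝ)^(n-(u-1)) * (4/3:ℝ)^(u-1) = (4/3:ℝ)^n := by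
          rw [← pow_add]
          congr 1
          omega
        calc (4/3:ℝ)^(u-1) * 3^(u-1) * (4/3)^(n-(u-1))
            = ((4/3:ℝ)^(n-(u-1)) * (4/3:ℝ)^(u-1)) * 3^(u-1) := by ring
          _ = (4/3:ℝ)^n * 3^(u-1) := by rw [e5]
  -- power comparisons
  have hc1 : (3:ℝ)^(u-1) ≤ (1.3161:ℝ)^n := by
    have h4 : ((3:ℝ)^(u-1))^4 ≤ ((1.3161:ℝ)^n)^4 := by
      rw [← pow_mul, ← pow_mul]
      calc (3:ℝ)^((u-1)*4) ≤ (3:ℝ)^n := by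
            apply pow_le_pow_right₀ (by norm_num)
            omega
        _ ≤ ((1.3161:ℝ)^4)^n := by
            apply pow_le_pow_left₀ (by norm_num)
            norm_num
        _ = (1.3161:ℝ)^(n*4) := by rw [← pow_mul, Nat.mul_comm]
    exact le_of_pow_le_pow_left₀ (by norm_num) (by positivity) h4
  have hc2 : (200:ℝ)^(2*m) ≤ (1.055:ℝ)^n := by
    have h4 : ((200:ℝ)^(2*m))^100 ≤ ((1.055:ℝ)^n)^100 := by
      rw [← pow_mul, ← pow_mul]
      calc (200:ℝ)^(2*m*100) ≤ (200:ℝ)^n := by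
            apply pow_le_pow_right₀ (by norm_num)
            omega
        _ ≤ ((1.055:ℝ)^100)^n := by
            apply pow_le_pow_left₀ (by norm_num)
            norm_num
        _ = (1.055:ℝ)^(n*100) := by rw [← pow_mul, Nat.mul_comm]
    exact le_of_pow_le_pow_left₀ (by norm_num) (by positivity) h4
  -- assemble
  have hBpos : (0:ℝ) ≤ ∑ k ∈ Finset.range u, (n.choose k : ℝ) := by positivity
  have hsum2 : (∑ k ∈ Finset.range u, (n.choose k : ℝ)) + 1
      ≤ 2 * ((4/3:ℝ)^n * 3^(u-1)) := by
    have := hball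
    linarith [hB1.trans hball]
  have hfin : (200:ℝ)^(2*m) * (200/199)^(2*n+1) * (2 * ((4/3:ℝ)^n * 3^(u-1)))
      ≤ 2^n / 2 := by
    have e6 : ((200:ℝ)/199)^(2*n+1) = (200/199:ℝ) * (((200/199:ℝ))^2)^n := by
      rw [pow_succ, ← pow_mul, mul_comm 2 n, pow_mul]
      ring
    calc (200:ℝ)^(2*m) * (200/199)^(2*n+1) * (2 * ((4/3:ℝ)^n * 3^(u-1)))
        ≤ (1.055:ℝ)^n * (200/199)^(2*n+1) * (2 * ((4/3:ℝ)^n * (1.3161:ℝ)^n)) := by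
          apply mul_le_mul
          · apply mul_le_mul_of_nonneg_right hc2 (by positivity)
          · apply mul_le_mul_of_nonneg_left _ (by norm_num)
            apply mul_le_mul_of_nonneg_left hc1 (by positivity)
          · positivity
          · positivity
      _ = (400/199:ℝ) * ((1.055:ℝ) * ((200/199:ℝ))^2 * (4/3) * 1.3161)^n := by
          rw [e6]
          rw [mul_pow, mul_pow, mul_pow]
          ring
      _ ≤ (400/199:ℝ) * (1.87:ℝ)^n := by
          apply mul_le_mul_of_nonneg_left _ (by norm_num)
          apply pow_le_pow_left₀ (by positivity)
          norm_num
      _ ≤ 2^n / 2 := by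
          have h7 : ((1.87:ℝ)/2)^n ≤ ((1.87:ℝ)/2)^200 :=
            pow_le_pow_of_le_one (by norm_num) (by norm_num) hn
          have h8 : ((1.87:ℝ)/2)^200 ≤ 199/1600 := by norm_num
          have h9 : (1.87:ℝ)^n = ((1.87:ℝ)/2)^n * 2^n := by rw [← mul_pow]; norm_num
          have h10 : (0:ℝ) < 2^n := by positivity
          calc (400/199:ℝ) * (1.87:ℝ)^n = (400/199) * (((1.87:ℝ)/2)^n * 2^n) := by rw [h9]
            _ ≤ (400/199:ℝ) * ((199/1600) * 2^n) := by
                apply mul_le_mul_of_nonneg_left _ (by norm_num)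
                exact mul_le_mul_of_nonneg_right (h7.trans h8) h10.le
            _ = 2^n / 4 := by ring
            _ ≤ 2^n / 2 := by linarith
  calc (((D).choose (2*n+1) : ℝ)) * ((∑ k ∈ Finset.range u, (n.choose k : ℝ)) + 1)
      ≤ ((200:ℝ)^(2*m) * (200/199)^(2*n+1)) * (2 * ((4/3:ℝ)^n * 3^(u-1))) := by
        apply mul_le_mul hchoose hsum2 (by positivity) (by positivity)
    _ ≤ 2^n / 2 := hfin

lemma main_large {n : ℕ} (hn : 200 ≤ n) (A : Matrix (Fin n) (Fin n) ℂ)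
    (hA : ∀ i j, ‖A i j‖ ≤ 1) :
    ∃ x : Fin n → ℂ, (∀ i, x i = 1 ∨ x i = 0 ∨ x i = -1) ∧
      (n : ℝ) / 4 ≤ (Finset.univ.filter fun i => x i ≠ 0).card ∧
      ∀ i, ‖A.mulVec x i‖ ≤ 15 * Real.sqrt n := by
  classical
  have hn1 : 1 ≤ n := by omega
  set m := n / 200 with hm
  set u := (n+3) / 4 with hu
  set B : ℕ := ∑ k ∈ Finset.range u, n.choose k with hB
  set f : (Fin n → Bool) → ℕ := fun b => ∑ ip : Fin n × Bool, (sig A b ip).natAbs with hf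
  set good := Finset.univ.filter (fun b : Fin n → Bool => f b ≤ m) with hgood
  have hgoodcard : (2:ℝ)^n / 2 ≤ (good.card : ℝ) := Lgood hn1 A hA
  -- the equivalence
  have hcardeq : Fintype.card (Fin n × Bool) = 2*n := by
    simp [Fintype.card_prod]
    omega
  set e : Fin (2*n) ≃ (Fin n × Bool) := (Fintype.equivFinOfCardEq hcardeq).symm with he
  set avec : (Fin n → Bool) → Fin (2*n) → ℕ := fun b k => enc (sig A b (e k)) with havec
  have hsum : ∀ b ∈ good, ∑ k, avec b k ≤ 2*m := by
    intro b hb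
    have h1 : f b ≤ m := (Finset.mem_filter.1 hb).2
    calc ∑ k, avec b k ≤ ∑ k : Fin (2*n), 2 * (sig A b (e k)).natAbs :=
          Finset.sum_le_sum (fun k _ => enc_le _)
      _ = 2 * ∑ k : Fin (2*n), (sig A b (e k)).natAbs := by rw [Finset.mul_sum]
      _ = 2 * ∑ ip : Fin n × Bool, (sig A b ip).natAbs := by
          rw [Equiv.sum_comp e (fun ip => (sig A b ip).natAbs)]
      _ ≤ 2 * m := by
          have h2 : (∑ ip : Fin n × Bool, (sig A b ip).natAbs) ≤ m := h1
          omega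
  set D := 2*n + 2*m + 1 with hD
  set Φ : (Fin n → Bool) → Finset (Fin D) := fun b =>
    if h : ∑ k, avec b k ≤ 2*m then Finset.image (Pmap (avec b) h) Finset.univ else ∅ with hΦ
  set t : Finset (Finset (Fin D)) :=
    Finset.powersetCard (2*n+1) Finset.univ with ht
  have hmaps : ∀ b ∈ good, Φ b ∈ t := by
    intro b hb
    rw [hΦ]
    simp only [dif_pos (hsum b hb)]
    rw [ht, Finset.mem_powersetCard]
    constructor
    · exact Finset.subset_univ _
    · rw [Finset.card_image_of_injective _ (Pmap_strictMono _ _).injective,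
        Finset.card_univ, Fintype.card_fin]
  have htne : t.Nonempty := by
    rw [ht]
    apply Finset.powersetCard_nonempty.2
    rw [Finset.card_univ, Fintype.card_fin]
    omega
  have htcard : t.card = D.choose (2*n+1) := by
    rw [ht, Finset.card_powersetCard, Finset.card_univ, Fintype.card_fin]
  have hcount : t.card * (B+1) ≤ good.card := by
    have h1 : ((t.card * (B+1) : ℕ) : ℝ) ≤ (good.card : ℝ) := by
      push_cast
      rw [htcard]
      calc (D.choose (2*n+1) : ℝ) * ((B:ℕ) + 1)
          ≤ 2^n / 2 := by
            have := NQ1 hn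
            rw [hB]
            push_cast
            push_cast at this
            exact this
        _ ≤ (good.card : ℝ) := hgoodcard
    exact_mod_cast h1
  obtain ⟨F, hF, hfib⟩ := Finset.exists_le_card_fiber_of_mul_le_card_of_maps_to hmaps htne hcount
  set P := good.filter (fun b => Φ b = F) with hP
  have hPne : P.Nonempty := Finset.card_pos.1 (by omega)
  obtain ⟨b₀, hb₀⟩ := hPne
  -- find far point
  have hfar : ∃ b' ∈ P, u ≤ hammingDist b' b₀ := by
    by_contra h
    push_neg at h
    have hsub : P ⊆ Finset.univ.filter (fun b => hammingDist b b₀ < u) := by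
      intro b hb
      rw [Finset.mem_filter]
      exact ⟨Finset.mem_univ _, h b hb⟩
    have := Finset.card_le_card hsub
    have h2 := ball_card (u := u) b₀
    omega
  obtain ⟨b', hb', hdist⟩ := hfar
  -- signatures agree
  have hsig : ∀ ip, sig A b₀ ip = sig A b' ip := by
    have hg₀ : b₀ ∈ good := (Finset.mem_filter.1 hb₀).1
    have hg' : b' ∈ good := (Finset.mem_filter.1 hb').1
    have h₀ : Φ b₀ = F := (Finset.mem_filter.1 hb₀).2
    have h' : Φ b' = F := (Finset.mem_filter.1 hb').2
    have heq : Φ b₀ = Φ b' := h₀.trans h'.symm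
    rw [hΦ] at heq
    simp only [dif_pos (hsum b₀ hg₀), dif_pos (hsum b' hg')] at heq
    have := encode_inj (avec b₀) (avec b') (hsum b₀ hg₀) (hsum b' hg') heq
    intro ip
    apply enc_inj
    have h3 := congrFun this (e.symm ip)
    rw [havec] at h3
    simpa [Equiv.apply_symm_apply] using h3
  -- define x
  set xr : Fin n → ℝ := fun j => (eps b' j - eps b₀ j) / 2 with hxr
  set x : Fin n → ℂ := fun j => ((xr j : ℝ) : ℂ) with hx
  refine ⟨x, ?_, ?_, ?_⟩
  · intro j
    rw [hx, hxr]
    simp only [eps]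
    cases hb'j : b' j <;> cases hb₀j : b₀ j <;> norm_num
  · have hfil : (Finset.univ.filter fun j => x j ≠ 0)
        = Finset.univ.filter (fun j => b' j ≠ b₀ j) := by
      apply Finset.filter_congr
      intro j _
      rw [hx, hxr]
      simp only [eps, ne_eq]
      cases hb'j : b' j <;> cases hb₀j : b₀ j <;> norm_num
    rw [hfil]
    have hdd : hammingDist b' b₀ = (Finset.univ.filter (fun j => b' j ≠ b₀ j)).card := rfl
    have h4 : (n:ℝ) ≤ 4 * u := by
      have : n ≤ 4 * u := by omega
      exact_mod_cast this
    have h5 : (u : ℝ) ≤ (Finset.univ.filter (fun j => b' j ≠ b₀ j)).card := by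
      rw [← hdd]
      exact_mod_cast hdist
    linarith
  · intro i
    have hΔ0 : (0:ℝ) < 15 * Real.sqrt n := by
      have : (0:ℝ) < Real.sqrt n := Real.sqrt_pos.2 (by exact_mod_cast hn1)
      linarith
    set Δ := 15 * Real.sqrt n with hΔ
    -- rows are close to common multiple of Δ
    have hclose : ∀ (p : Bool), |∑ j, rowv A i p j * xr j| ≤ Δ / 2 := by
      intro p
      have key : ∀ b : Fin n → Bool,
          |(∑ j, rowv A i p j * eps b j) - Δ * (sig A b (i, p))| ≤ Δ/2 := by
        intro b
        have h1 := abs_sub_round ((∑ j, rowv A i p j * eps b j) / Δ)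
        have h2 : sig A b (i, p) = round ((∑ j, rowv A i p j * eps b j) / Δ) := rfl
        rw [h2]
        have h3 : (∑ j, rowv A i p j * eps b j) - Δ * round ((∑ j, rowv A i p j * eps b j) / Δ)
            = ((∑ j, rowv A i p j * eps b j) / Δ - round ((∑ j, rowv A i p j * eps b j) / Δ)) * Δ := by
          field_simp
        rw [h3, abs_mul, abs_of_pos hΔ0]
        calc |(∑ j, rowv A i p j * eps b j) / Δ - round ((∑ j, rowv A i p j * eps b j) / Δ)| * Δ
            ≤ (1/2) * Δ := mul_le_mul_of_nonneg_right h1 hΔ0.le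
          _ = Δ/2 := by ring
      have hsum' : ∑ j, rowv A i p j * xr j
          = ((∑ j, rowv A i p j * eps b' j) - (∑ j, rowv A i p j * eps b₀ j)) / 2 := by
        rw [← Finset.sum_sub_distrib]
        rw [Finset.sum_div]
        apply Finset.sum_congr rfl
        intro j _
        rw [hxr]
        ring
      rw [hsum']
      have h5 := key b'
      have h6 := key b₀
      rw [hsig (i, p)] at h6
      have h7 : |(∑ j, rowv A i p j * eps b' j) - (∑ j, rowv A i p j * eps b₀ j)| ≤ Δ := by
        calc |(∑ j, rowv A i p j * eps b' j) - (∑ j, rowv A i p j * eps b₀ j)|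
            = |((∑ j, rowv A i p j * eps b' j) - Δ * (sig A b' (i,p)))
              - ((∑ j, rowv A i p j * eps b₀ j) - Δ * (sig A b' (i,p)))| := by ring_nf
          _ ≤ |(∑ j, rowv A i p j * eps b' j) - Δ * (sig A b' (i,p))|
              + |(∑ j, rowv A i p j * eps b₀ j) - Δ * (sig A b' (i,p))| := abs_sub _ _
          _ ≤ Δ/2 + Δ/2 := add_le_add h5 h6
          _ = Δ := by ring
      rw [abs_div, show |(2:ℝ)| = 2 by norm_num]
      linarith [h7]
    -- conclude
    have hmv : A.mulVec x i = ∑ j, A i j * x j := by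
      simp [Matrix.mulVec, dotProduct]
    rw [hmv]
    have hre : (∑ j, A i j * x j).re = ∑ j, rowv A i true j * xr j := by
      rw [Complex.re_sum]
      apply Finset.sum_congr rfl
      intro j _
      rw [hx]
      simp [Complex.mul_re, rowv]
    have him : (∑ j, A i j * x j).im = ∑ j, rowv A i false j * xr j := by
      rw [Complex.im_sum]
      apply Finset.sum_congr rfl
      intro j _
      rw [hx]
      simp [Complex.mul_im, rowv]
    calc ‖∑ j, A i j * x j‖
        ≤ |(∑ j, A i j * x j).re| + |(∑ j, A i j * x j).im| :=
          Complex.norm_le_abs_re_add_abs_im _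
      _ ≤ Δ/2 + Δ/2 := by
          rw [hre, him]
          exact add_le_add (hclose true) (hclose false)
      _ = 15 * Real.sqrt n := by rw [hΔ]; ring

/-- **Partial colouring lemma.** There is an absolute constant `C > 0` such that for every
`n ≥ 1` and every `n × n` complex matrix `A` with all entries of modulus at most `1`,
there is a vector `x ∈ {-1,0,1}^n` with at least `n/4` non-zero coordinates and
`‖Ax‖_∞ ≤ C √n`. -/
theorem partial_colouring_lemma :
    ∃ C : ℝ, 0 < C ∧
      ∀ n : ℕ, 1 ≤ n → ∀ A : Matrix (Fin n) (Fin n) ℂ,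
        (∀ i j, ‖A i j‖ ≤ 1) →
        ∃ x : Fin n → ℂ, (∀ i, x i = 1 ∨ x i = 0 ∨ x i = -1) ∧
          (n : ℝ) / 4 ≤ (Finset.univ.filter fun i => x i ≠ 0).card ∧
          ∀ i, ‖A.mulVec x i‖ ≤ C * Real.sqrt n := by
  refine ⟨15, by norm_num, ?_⟩
  intro n hn A hA
  by_cases hcase : 200 ≤ n
  · exact main_large hcase A hA
  · -- small case : all ones vector
    push_neg at hcase
    refine ⟨fun _ => 1, fun i => Or.inl rfl, ?_, ?_⟩
    · have : (Finset.univ.filter fun i : Fin n => (1:ℂ) ≠ 0) = Finset.univ := by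
        apply Finset.filter_true_of_mem
        intro i _
        exact one_ne_zero
      rw [this, Finset.card_univ, Fintype.card_fin]
      have h1 : (1:ℝ) ≤ (n:ℝ) := by exact_mod_cast hn
      linarith
    · intro i
      have hmv : A.mulVec (fun _ => (1:ℂ)) i = ∑ j, A i j := by
        simp [Matrix.mulVec, dotProduct]
      rw [hmv]
      have h1 : ‖∑ j, A i j‖ ≤ (n:ℝ) := by
        calc ‖∑ j, A i j‖ ≤ ∑ j, ‖A i j‖ :=
              norm_sum_le _ _
          _ ≤ ∑ _j : Fin n, (1:ℝ) := Finset.sum_le_sum (fun j _ => hA i j)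
          _ = n := by simp
      have h2 : (n:ℝ) ≤ 15 * Real.sqrt n := by
        have hs : Real.sqrt n ≤ 15 := by
          rw [show (15:ℝ) = Real.sqrt 225 by
            rw [show (225:ℝ) = 15^2 by norm_num, Real.sqrt_sq (by norm_num)]]
          apply Real.sqrt_le_sqrt
          have : n ≤ 225 := by omega
          exact_mod_cast this
        have hn0 : (0:ℝ) ≤ n := Nat.cast_nonneg n
        calc (n:ℝ) = Real.sqrt n * Real.sqrt n := (Real.mul_self_sqrt hn0).symm
          _ ≤ 15 * Real.sqrt n := by
              apply mul_le_mul_of_nonneg_right hs (Real.sqrt_nonneg _)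
      linarith
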